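/- For all positive integers m, n, the function h₀(x) = √(n cos²x/(m+2n) + m sin²x/(2m+n)) satisfies the Sturm–Liouville equation −σ(x)·d/dx(σ(x)·dh₀/dx) + 2(m+n)²·h₀(x) = 2·ρ(x)·h₀(x) for all real x, i.e. h₀ is a solution of the associated periodic Sturm–Liouville problem with parameter l = m+n and eigenvalue λ = 2; moreover h₀(x) > 0 for all real x. -/

import Mathlib

open Real

/-- `σ(x) = √(m² + 4mn + n² − (m² − n²)cos 2x)`. -/
noncomputable def sigmaMN (m n : ℕ) (x : ℝ) : ℝ :=
  Real.sqrt ((m : ℝ) ^ 2 + 4 * m * n + n ^ 2 - ((m : ℝ) ^ 2 - n ^ 2) * Real.cos (2 * x))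

/-- `ρ(x) = (m+n)(m+n − (m−n)cos 2x)`. -/
noncomputable def rhoMN (m n : ℕ) (x : ℝ) : ℝ :=
  ((m : ℝ) + n) * ((m : ℝ) + n - ((m : ℝ) - n) * Real.cos (2 * x))

/-- `h₀(x) = √(n cos²x/(m+2n) + m sin²x/(2m+n))` solves the associated periodic
Sturm–Liouville problem `−σ(x)·d/dx(σ(x)·dh/dx) + 2l²·h = λ·ρ(x)·h` with parameter
`l = m + n` and eigenvalue `λ = 2`; moreover `h₀(x) > 0` for all real `x`. -/
theorem h0_solves_sturm_liouville (m n : ℕ) (hm : 0 < m) (hn : 0 < n)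
    (h₀ : ℝ → ℝ)
    (hh₀ : ∀ t : ℝ, h₀ t = Real.sqrt ((n : ℝ) * Real.cos t ^ 2 / (m + 2 * n) +
      (m : ℝ) * Real.sin t ^ 2 / (2 * m + n))) (x : ℝ) :
    (-(sigmaMN m n x * deriv (fun t : ℝ => sigmaMN m n t * deriv h₀ t) x) +
        2 * ((m : ℝ) + n) ^ 2 * h₀ x = 2 * rhoMN m n x * h₀ x) ∧ 0 < h₀ x := by
  have hm' : (0:ℝ) < m := by exact_mod_cast hm
  have hn' : (0:ℝ) < n := by exact_mod_cast hn
  have hd1 : (0:ℝ) < (m:ℝ) + 2 * n := by linarith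
  have hd2 : (0:ℝ) < 2 * (m:ℝ) + n := by linarith
  set u : ℝ → ℝ := fun t => (n:ℝ) * Real.cos t ^ 2 / ((m:ℝ) + 2 * n) +
      (m:ℝ) * Real.sin t ^ 2 / (2 * (m:ℝ) + n) with hu_def
  set D : ℝ := ((m:ℝ) + 2 * n) * (2 * (m:ℝ) + n) with hD_def
  have hD : (0:ℝ) < D := mul_pos hd1 hd2
  -- positivity of u
  have hu : ∀ t : ℝ, 0 < u t := by
    intro t
    have hnum : 0 < (n:ℝ) * (2 * m + n) * Real.cos t ^ 2 +
        (m:ℝ) * ((m:ℝ) + 2 * n) * Real.sin t ^ 2 := by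
      by_cases hc : Real.cos t = 0
      · have hs : Real.sin t ^ 2 = 1 := by
          have := Real.sin_sq_add_cos_sq t
          rw [hc] at this; nlinarith
        rw [hc, hs]; nlinarith
      · have hc2 : 0 < Real.cos t ^ 2 := by positivity
        nlinarith [sq_nonneg (Real.sin t), mul_pos hn' hd2, mul_pos hm' hd1]
    have : u t = ((n:ℝ) * (2 * m + n) * Real.cos t ^ 2 +
        (m:ℝ) * ((m:ℝ) + 2 * n) * Real.sin t ^ 2) / D := by
      rw [hu_def, hD_def]; field_simp
    rw [this]; exact div_pos hnum hD
  have hh : h₀ = fun t => Real.sqrt (u t) := by funext t; rw [hh₀ t]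
  have hpos : 0 < h₀ x := by rw [hh]; exact Real.sqrt_pos.mpr (hu x)
  refine ⟨?_, hpos⟩
  -- σ t = √(2D) * h₀ t
  have hσ : ∀ t : ℝ, sigmaMN m n t = Real.sqrt (2 * D) * h₀ t := by
    intro t
    rw [hh, sigmaMN, ← Real.sqrt_mul (by positivity : (0:ℝ) ≤ 2 * D)]
    congr 1
    have hs : Real.sin t ^ 2 = 1 - Real.cos t ^ 2 := Real.sin_sq t
    have hut : u t = (n:ℝ) * Real.cos t ^ 2 / ((m:ℝ) + 2 * n) +
        (m:ℝ) * Real.sin t ^ 2 / (2 * (m:ℝ) + n) := rfl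
    rw [hut, Real.cos_two_mul, hs, hD_def]
    field_simp; ring
  -- derivative of u
  set v : ℝ → ℝ := fun t => 2 * (Real.sin t * Real.cos t) *
      ((m:ℝ) / (2 * (m:ℝ) + n) - (n:ℝ) / ((m:ℝ) + 2 * n)) with hv_def
  have hu_deriv : ∀ t : ℝ, HasDerivAt u (v t) t := by
    intro t
    have h1 : HasDerivAt (fun t => Real.cos t ^ 2)
        (2 * Real.cos t * (-Real.sin t)) t := by
      have := (Real.hasDerivAt_cos t).fun_pow 2
      exact this.congr_deriv (by norm_num)
    have h2 : HasDerivAt (fun t => Real.sin t ^ 2)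
        (2 * Real.sin t * Real.cos t) t := by
      have := (Real.hasDerivAt_sin t).fun_pow 2
      exact this.congr_deriv (by norm_num)
    have := (((h1.const_mul (n:ℝ)).div_const ((m:ℝ) + 2 * n)).add
      ((h2.const_mul (m:ℝ)).div_const (2 * (m:ℝ) + n)))
    refine this.congr_deriv ?_
    rw [hv_def]; field_simp; ring
  have hh_deriv : ∀ t : ℝ, HasDerivAt h₀ (v t / (2 * Real.sqrt (u t))) t := by
    intro t
    rw [hh]
    have := (Real.hasDerivAt_sqrt (ne_of_gt (hu t))).comp t (hu_deriv t)
    refine this.congr_deriv ?_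
    field_simp [mul_comm]
  -- the inner function equals √(2D) * v t / 2
  have hinner : (fun t : ℝ => sigmaMN m n t * deriv h₀ t) =
      fun t : ℝ => Real.sqrt (2 * D) * v t / 2 := by
    funext t
    rw [hσ t, (hh_deriv t).deriv, hh]
    have hsu : Real.sqrt (u t) ≠ 0 := ne_of_gt (Real.sqrt_pos.mpr (hu t))
    field_simp
  rw [hinner]
  -- derivative of v
  have hv_deriv : HasDerivAt v
      (2 * (Real.cos x ^ 2 - Real.sin x ^ 2) *
        ((m:ℝ) / (2 * (m:ℝ) + n) - (n:ℝ) / ((m:ℝ) + 2 * n))) x := by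
    have h1 : HasDerivAt (fun t => Real.sin t * Real.cos t)
        (Real.cos x * Real.cos x + Real.sin x * (-Real.sin x)) x :=
      (Real.hasDerivAt_sin x).mul (Real.hasDerivAt_cos x)
    have := (h1.const_mul (2:ℝ)).mul_const
        ((m:ℝ) / (2 * (m:ℝ) + n) - (n:ℝ) / ((m:ℝ) + 2 * n))
    refine this.congr_deriv ?_
    ring
  have hder : deriv (fun t : ℝ => Real.sqrt (2 * D) * v t / 2) x =
      Real.sqrt (2 * D) * (2 * (Real.cos x ^ 2 - Real.sin x ^ 2) *
        ((m:ℝ) / (2 * (m:ℝ) + n) - (n:ℝ) / ((m:ℝ) + 2 * n))) / 2 := by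
    exact (((hv_deriv.const_mul (Real.sqrt (2 * D))).div_const 2)).deriv
  rw [hder, hσ x, rhoMN, Real.cos_two_mul]
  have hsq : Real.sqrt (2 * D) * Real.sqrt (2 * D) = 2 * D :=
    Real.mul_self_sqrt (by positivity)
  set k : ℝ := (m:ℝ) / (2 * (m:ℝ) + n) - (n:ℝ) / ((m:ℝ) + 2 * n) with hk
  have hid : -(2 * D * (Real.cos x ^ 2 - Real.sin x ^ 2) * k) + 2 * ((m:ℝ) + n) ^ 2
      = 2 * (((m:ℝ) + n) * ((m:ℝ) + n - ((m:ℝ) - n) * (2 * Real.cos x ^ 2 - 1))) := by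
    have hs : Real.sin x ^ 2 = 1 - Real.cos x ^ 2 := Real.sin_sq x
    rw [hs, hk, hD_def]
    field_simp; ring
  linear_combination (h₀ x) * hid -
    (h₀ x * (Real.cos x ^ 2 - Real.sin x ^ 2) * k) * hsq
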